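/- For all integers n and r with 0 ≤ r ≤ n−1, the cardinality of B⁺(n,r) equals T(n,r). -/

import Mathlib

open Finset

/-- A letter for arrangements: white, black, or decorated. -/
inductive Letter : Type
  | white : Letter
  | black : Letter
  | decorated : Letter
  deriving DecidableEq

/-- `B n r`: words of length `n` over `Letter` with exactly `r` black letters
whose last letter is not black. -/
def B (n r : ℕ) : Set (List Letter) :=
  {w | w.length = n ∧ w.count Letter.black = r ∧ w.getLast? ≠ some Letter.black}

/-- `B⁺ n r`: members of `B n r` containing a decorated letter strictly to the
right of the last black letter. -/
def Bplus (n r : ℕ) : Set (List Letter) :=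
  {w | w ∈ B n r ∧ ∃ a b : List Letter, w = a ++ Letter.decorated :: b ∧ Letter.black ∉ b}

/-- `T n r = ∑_{j=r+1}^{n} C(n,j)·C(j−1,r)`. -/
def T (n r : ℕ) : ℕ := ∑ j ∈ Icc (r + 1) n, n.choose j * (j - 1).choose r

/-! ### Auxiliary definitions and lemmas -/

/-- `good l` means `l` contains a decorated letter before any black letter. -/
def good : List Letter → Bool
  | [] => false
  | (Letter.decorated :: _) => true
  | (Letter.white :: l) => good l
  | (Letter.black :: _) => false

/-- All words of length `n` with exactly `r` black letters. -/
def A : ℕ → ℕ → Finset (List Letter)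
  | 0, 0 => {[]}
  | 0, _+1 => ∅
  | n+1, 0 => (A n 0).image (Letter.white :: ·) ∪ (A n 0).image (Letter.decorated :: ·)
  | n+1, r+1 => ((A n (r+1)).image (Letter.white :: ·) ∪
      (A n (r+1)).image (Letter.decorated :: ·)) ∪ (A n r).image (Letter.black :: ·)

/-- All "good" words of length `n` with exactly `r` black letters. -/
def G : ℕ → ℕ → Finset (List Letter)
  | 0, _ => ∅
  | n+1, r => (A n r).image (Letter.decorated :: ·) ∪ (G n r).image (Letter.white :: ·)

lemma mem_A : ∀ (n r : ℕ) (l : List Letter),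
    l ∈ A n r ↔ l.length = n ∧ l.count Letter.black = r := by
  intro n
  induction n with
  | zero => rintro (_|r) (_|⟨x,l⟩) <;> simp [A]
  | succ n ih =>
    rintro r (_|⟨x,l⟩)
    · cases r <;> simp [A]
    · cases r with
      | zero => cases x <;> simp [A, ih, List.count_cons]
      | succ r => cases x <;> simp [A, ih, List.count_cons]

lemma mem_G : ∀ (n r : ℕ) (l : List Letter),
    l ∈ G n r ↔ l.length = n ∧ l.count Letter.black = r ∧ good l := by
  intro n
  induction n with
  | zero => rintro r (_|⟨x,l⟩) <;> simp [G, good]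
  | succ n ih =>
    rintro r (_|⟨x,l⟩)
    · simp [G, good]
    · cases x <;> simp [G, good, ih, mem_A, List.count_cons]

lemma disj_image {x y : Letter} (hxy : x ≠ y) (s t : Finset (List Letter)) :
    Disjoint (s.image (x :: ·)) (t.image (y :: ·)) := by
  rw [Finset.disjoint_left]
  rintro l hl hl'
  simp only [Finset.mem_image] at hl hl'
  obtain ⟨a, -, rfl⟩ := hl
  obtain ⟨b, -, h⟩ := hl'
  injection h with h1 _
  exact hxy h1.symm

lemma card_A : ∀ (n r : ℕ), (A n r).card = n.choose r * 2 ^ (n - r) := by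
  intro n
  induction n with
  | zero => rintro (_|r) <;> simp [A]
  | succ n ih =>
    rintro (_|r)
    · rw [A, Finset.card_union_of_disjoint (disj_image (by simp) _ _),
        Finset.card_image_of_injective _ (List.cons_injective),
        Finset.card_image_of_injective _ (List.cons_injective), ih]
      simp [pow_succ]
      ring
    · rw [A, Finset.card_union_of_disjoint
        (by
          rw [Finset.disjoint_union_left]
          exact ⟨disj_image (by simp) _ _, disj_image (by simp) _ _⟩),
        Finset.card_union_of_disjoint (disj_image (by simp) _ _),
        Finset.card_image_of_injective _ (List.cons_injective),
        Finset.card_image_of_injective _ (List.cons_injective),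
        Finset.card_image_of_injective _ (List.cons_injective), ih, ih,
        Nat.choose_succ_succ, Nat.succ_sub_succ]
      rcases Nat.lt_or_ge n (r+1) with hn | hn
      · have h1 : n.choose (r+1) = 0 := Nat.choose_eq_zero_of_lt hn
        simp [h1]
      · have h2 : n - r = (n - (r+1)) + 1 := by omega
        rw [h2, pow_succ]
        ring

lemma T_succ (n r : ℕ) : T (n+1) r = n.choose r * 2 ^ (n - r) + T n r := by
  rcases Nat.lt_or_ge n r with hn | hn
  · have h0 : n.choose r = 0 := Nat.choose_eq_zero_of_lt hn
    have h1 : T (n+1) r = 0 := by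
      rw [T, Finset.Icc_eq_empty (by omega), Finset.sum_empty]
    have h2 : T n r = 0 := by
      rw [T, Finset.Icc_eq_empty (by omega), Finset.sum_empty]
    rw [h0, h1, h2]
    simp
  · have himg : (Finset.Icc r n).image (· + 1) = Finset.Icc (r+1) (n+1) := by
      rw [Finset.image_add_right_Icc]
    have step1 : T (n+1) r = ∑ k ∈ Icc r n, (n+1).choose (k+1) * k.choose r := by
      rw [T, ← himg, Finset.sum_image (fun a _ b _ h => by simpa using h)]
      simp
    have step2 : ∑ k ∈ Icc r n, (n+1).choose (k+1) * k.choose r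
        = (∑ k ∈ Icc r n, n.choose k * k.choose r)
          + ∑ k ∈ Icc r n, n.choose (k+1) * k.choose r := by
      rw [← Finset.sum_add_distrib]
      refine Finset.sum_congr rfl fun k _ => ?_
      rw [Nat.choose_succ_succ]
      ring
    have step3 : ∑ k ∈ Icc r n, n.choose (k+1) * k.choose r = T n r := by
      have e : ∑ k ∈ Icc r n, n.choose (k+1) * k.choose r
          = ∑ j ∈ Icc (r+1) (n+1), n.choose j * (j-1).choose r := by
        rw [← himg, Finset.sum_image (fun a _ b _ h => by simpa using h)]
        simp
      rw [e, Finset.sum_Icc_succ_top (by omega : r + 1 ≤ n + 1), Nat.choose_succ_self, T]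
      simp
    have step4 : ∑ k ∈ Icc r n, n.choose k * k.choose r = n.choose r * 2 ^ (n - r) := by
      have : ∀ k ∈ Icc r n, n.choose k * k.choose r = n.choose r * (n-r).choose (k-r) := by
        intro k hk
        rw [Finset.mem_Icc] at hk
        exact Nat.choose_mul hk.1
      rw [Finset.sum_congr rfl this, ← Finset.mul_sum]
      congr 1
      have himg2 : (Finset.Icc 0 (n-r)).image (· + r) = Finset.Icc r n := by
        rw [Finset.image_add_right_Icc, Nat.zero_add, Nat.sub_add_cancel hn]
      rw [← himg2, Finset.sum_image (fun a _ b _ h => by simpa using h)]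
      have e2 : Finset.Icc 0 (n - r) = Finset.range (n - r + 1) := by
        ext x
        simp only [Finset.mem_Icc, Finset.mem_range]
        omega
      rw [e2]
      simpa using Nat.sum_range_choose (n - r)
    rw [step1, step2, step3, step4]

lemma card_G : ∀ (n r : ℕ), (G n r).card = T n r := by
  intro n
  induction n with
  | zero =>
    intro r
    rw [G, T, Finset.Icc_eq_empty (by omega), Finset.sum_empty, Finset.card_empty]
  | succ n ih =>
    intro r
    rw [G, Finset.card_union_of_disjoint (disj_image (by simp) _ _),
      Finset.card_image_of_injective _ (List.cons_injective),
      Finset.card_image_of_injective _ (List.cons_injective), ih, card_A, T_succ]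

lemma good_iff : ∀ (l : List Letter), good l = true ↔
    ∃ b a : List Letter, l = b ++ Letter.decorated :: a ∧ Letter.black ∉ b := by
  intro l
  induction l with
  | nil => simp [good]
  | cons x l ih =>
    cases x with
    | decorated =>
      constructor
      · intro _
        exact ⟨[], l, rfl, by simp⟩
      · intro _
        rfl
    | white =>
      rw [show good (Letter.white :: l) = good l from rfl, ih]
      constructor
      · rintro ⟨b, a, rfl, hb⟩
        exact ⟨Letter.white :: b, a, rfl, by simp [hb]⟩
      · rintro ⟨b, a, h, hb⟩
        rcases b with _ | ⟨y, b⟩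
        · simp at h
        · rw [List.cons_append] at h
          injection h with h1 h2
          exact ⟨b, a, h2, fun hm => hb (by simp [hm])⟩
    | black =>
      rw [show good (Letter.black :: l) = false from rfl]
      simp only [Bool.false_eq_true, false_iff]
      rintro ⟨b, a, h, hb⟩
      rcases b with _ | ⟨y, b⟩
      · simp at h
      · rw [List.cons_append] at h
        injection h with h1 h2
        exact hb (by simp [← h1])

lemma good_head : ∀ (l : List Letter), good l = true → l.head? ≠ some Letter.black := by
  rintro (_|⟨x,l⟩) h
  · exact Bool.noConfusion h
  · cases x <;> simp_all [good]

lemma mem_Bplus_iff (n r : ℕ) (w : List Letter) : w ∈ Bplus n r ↔ w.reverse ∈ G n r := by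
  rw [mem_G, good_iff]
  constructor
  · rintro ⟨⟨hlen, hcount, -⟩, a, b, rfl, hb⟩
    refine ⟨by simp at hlen ⊢; omega, by simp at hcount ⊢; omega,
      b.reverse, a.reverse, by simp, by simp [hb]⟩
  · rintro ⟨hlen, hcount, b, a, hrev, hb⟩
    have hw : w = a.reverse ++ Letter.decorated :: b.reverse := by
      have := congrArg List.reverse hrev
      simpa using this
    refine ⟨⟨by simpa using hlen, by simpa using hcount, ?_⟩,
      a.reverse, b.reverse, hw, by simpa using hb⟩
    have hg : good w.reverse = true := (good_iff _).2 ⟨b, a, hrev, hb⟩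
    have := good_head _ hg
    rwa [List.head?_reverse] at this

theorem card_Bplus_eq_T (n r : ℕ) (h : r + 1 ≤ n) : (Bplus n r).ncard = T n r := by
  have hset : Bplus n r = ↑((G n r).image List.reverse) := by
    ext w
    simp only [Finset.coe_image, Set.mem_image, Finset.mem_coe]
    rw [mem_Bplus_iff]
    constructor
    · intro hw
      exact ⟨w.reverse, hw, by simp⟩
    · rintro ⟨l, hl, rfl⟩
      simpa using hl
  rw [hset, Set.ncard_coe_finset,
    Finset.card_image_of_injective _ List.reverse_injective, card_G]
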